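/- Assume ᾱ_ν(q,v,t) = α_ν(q,v,t) for every ν = 1,…,k and every (q,v,t) ∈ ℝⁿ × ℝᵐ × ℝ. Then: (i) ∑_{i=1}^n û_i(q,v,t)·(∂L/∂u_i)(q,û(q,v,t),t) = ∑_{r=1}^m v_r (∂L*/∂v_r)(q,v,t) for all (q,v,t), hence E = E*; (ii) along every C² curve satisfying the constraints and solving the Voronec equations, d/dt[E*(q(t),v(t),t)] = −(∂L/∂t)(q(t), û(q(t),v(t),t), t); (iii) if moreover ∂L/∂t ≡ 0, then E* is constant along every such curve. -/

import Mathlib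

open scoped BigOperators
noncomputable section
namespace NH

/-- The phase point `(q, v, t)` with `q : ℝⁿ` (n = m+k) and independent velocities `v : ℝᵐ`. -/
abbrev Pt (m k : ℕ) : Type := (Fin (m+k) → ℝ) × (Fin m → ℝ) × ℝ

/-- The full phase point `(q, u, t)` with all velocities `u : ℝⁿ`. -/
abbrev PtL (m k : ℕ) : Type := (Fin (m+k) → ℝ) × (Fin (m+k) → ℝ) × ℝ

/-- Partial derivative of `f (q, w, t)` with respect to `q_i`. -/
def pq {n m' : ℕ} (f : (Fin n → ℝ) × (Fin m' → ℝ) × ℝ → ℝ) (i : Fin n)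
    (x : (Fin n → ℝ) × (Fin m' → ℝ) × ℝ) : ℝ :=
  fderiv ℝ f x (Pi.single i 1, 0, 0)

/-- Partial derivative of `f (q, w, t)` with respect to the velocity variable `w_j`. -/
def pv {n m' : ℕ} (f : (Fin n → ℝ) × (Fin m' → ℝ) × ℝ → ℝ) (j : Fin m')
    (x : (Fin n → ℝ) × (Fin m' → ℝ) × ℝ) : ℝ :=
  fderiv ℝ f x (0, Pi.single j 1, 0)

/-- Partial derivative of `f (q, w, t)` with respect to time `t`. -/
def pt {n m' : ℕ} (f : (Fin n → ℝ) × (Fin m' → ℝ) × ℝ → ℝ)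
    (x : (Fin n → ℝ) × (Fin m' → ℝ) × ℝ) : ℝ :=
  fderiv ℝ f x (0, 0, 1)

/-- Partial derivative of `U (q, t)` with respect to `q_i`. -/
def pUq {n : ℕ} (U : (Fin n → ℝ) × ℝ → ℝ) (i : Fin n) (x : (Fin n → ℝ) × ℝ) : ℝ :=
  fderiv ℝ U x (Pi.single i 1, 0)

/-- Partial derivative of `U (q, t)` with respect to `t`. -/
def pUt {n : ℕ} (U : (Fin n → ℝ) × ℝ → ℝ) (x : (Fin n → ℝ) × ℝ) : ℝ :=
  fderiv ℝ U x (0, 1)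

variable {m k : ℕ}

/-- `û(q,v,t) = (v₁,…,vₘ, α₁(q,v,t),…,α_k(q,v,t))`. -/
def uhat (α : Fin k → Pt m k → ℝ) (x : Pt m k) : Fin (m+k) → ℝ :=
  Fin.append x.2.1 (fun ν => α ν x)

/-- The full phase point `(q, û(q,v,t), t)` associated to `(q,v,t)`. -/
def Lpt (α : Fin k → Pt m k → ℝ) (x : Pt m k) : PtL m k :=
  (x.1, uhat α x, x.2.2)

/-- The restricted Lagrangian `L*(q,v,t) = L(q, û(q,v,t), t)`. -/
def Lstar (L : PtL m k → ℝ) (α : Fin k → Pt m k → ℝ) (x : Pt m k) : ℝ :=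
  L (Lpt α x)

/-- `ᾱ_ν(q,v,t) = ∑_r v_r ∂α_ν/∂v_r`. -/
def abar (α : Fin k → Pt m k → ℝ) (ν : Fin k) (x : Pt m k) : ℝ :=
  ∑ r : Fin m, x.2.1 r * pv (α ν) r x

/-- The restricted energy `E*(q,v,t) = ∑_r v_r ∂L*/∂v_r − L*`. -/
def Estar (L : PtL m k → ℝ) (α : Fin k → Pt m k → ℝ) (x : Pt m k) : ℝ :=
  ∑ r : Fin m, x.2.1 r * pv (Lstar L α) r x - Lstar L α x

/-- The energy `E(q,v,t) = ∑_i û_i (∂L/∂u_i)(q,û,t) − L*(q,v,t)`. -/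
def En (L : PtL m k → ℝ) (α : Fin k → Pt m k → ℝ) (x : Pt m k) : ℝ :=
  ∑ i : Fin (m+k), uhat α x i * pv L i (Lpt α x) - Lstar L α x

/-- `q̇_i(t)`. -/
def qdot {n : ℕ} (q : ℝ → Fin n → ℝ) (t : ℝ) (i : Fin n) : ℝ :=
  deriv (fun s => q s i) t

/-- The independent velocities `v(t) = (q̇₁,…,q̇ₘ)` along a curve. -/
def vel (m k : ℕ) (q : ℝ → Fin (m+k) → ℝ) (t : ℝ) (r : Fin m) : ℝ :=
  qdot q t (Fin.castAdd k r)

/-- The point `(q(t), v(t), t)` along a curve. -/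
def along (m k : ℕ) (q : ℝ → Fin (m+k) → ℝ) (t : ℝ) : Pt m k :=
  (q t, vel m k q t, t)

/-- The curve satisfies the nonholonomic constraints: `q̇_{m+ν} = α_ν(q, v, t)`. -/
def Constrained (α : Fin k → Pt m k → ℝ) (q : ℝ → Fin (m+k) → ℝ) : Prop :=
  ∀ (t : ℝ) (ν : Fin k), qdot q t (Fin.natAdd m ν) = α ν (along m k q t)

/-- The Voronec coefficients `B_rν(t)` along a constrained curve. -/
def Bco (α : Fin k → Pt m k → ℝ) (q : ℝ → Fin (m+k) → ℝ) (r : Fin m) (ν : Fin k) (t : ℝ) : ℝ :=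
  deriv (fun s => pv (α ν) r (along m k q s)) t
    - pq (α ν) (Fin.castAdd k r) (along m k q t)
    - ∑ μ : Fin k, pv (α μ) r (along m k q t) * pq (α ν) (Fin.natAdd m μ) (along m k q t)

/-- The Voronec equations of motion along a constrained curve. -/
def Voronec (L : PtL m k → ℝ) (α : Fin k → Pt m k → ℝ) (q : ℝ → Fin (m+k) → ℝ) : Prop :=
  ∀ (r : Fin m) (t : ℝ),
    deriv (fun s => pv (Lstar L α) r (along m k q s)) t
      - pq (Lstar L α) (Fin.castAdd k r) (along m k q t)
      - ∑ ν : Fin k, pq (Lstar L α) (Fin.natAdd m ν) (along m k q t) * pv (α ν) r (along m k q t)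
      - ∑ ν : Fin k, Bco α q r ν t * pv L (Fin.natAdd m ν) (Lpt α (along m k q t)) = 0

variable {m k : ℕ}

lemma uhat_castAdd (α : Fin k → Pt m k → ℝ) (x : Pt m k) (r : Fin m) :
    uhat α x (Fin.castAdd k r) = x.2.1 r := Fin.append_left _ _ _

lemma uhat_natAdd (α : Fin k → Pt m k → ℝ) (x : Pt m k) (ν : Fin k) :
    uhat α x (Fin.natAdd m ν) = α ν x := Fin.append_right _ _ _

-- the velocity projection CLM

def vproj (m k : ℕ) (r : Fin m) : Pt m k →L[ℝ] ℝ :=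
  (ContinuousLinearMap.proj r).comp
    ((ContinuousLinearMap.fst ℝ (Fin m → ℝ) ℝ).comp
      (ContinuousLinearMap.snd ℝ (Fin (m+k) → ℝ) ((Fin m → ℝ) × ℝ)))

lemma vproj_apply (r : Fin m) (w : Pt m k) : vproj m k r w = w.2.1 r := rfl

def Uder (α : Fin k → Pt m k → ℝ) (x : Pt m k) : Pt m k →L[ℝ] (Fin (m+k) → ℝ) :=
  ContinuousLinearMap.pi (Fin.addCases (fun r => vproj m k r) (fun ν => fderiv ℝ (α ν) x))

lemma hasFDerivAt_uhat (α : Fin k → Pt m k → ℝ) (hα : ∀ ν, ContDiff ℝ 2 (α ν)) (x : Pt m k) :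
    HasFDerivAt (uhat α) (Uder α x) x := by
  rw [hasFDerivAt_pi']
  intro i
  induction i using Fin.addCases with
  | left r =>
      have : (fun y => uhat α y (Fin.castAdd k r)) = fun y : Pt m k => y.2.1 r := by
        funext y; exact uhat_castAdd α y r
      rw [this]
      have h2 : (ContinuousLinearMap.proj (Fin.castAdd k r)).comp (Uder α x) = vproj m k r := by
        rw [Uder, ContinuousLinearMap.proj_pi]; simp
      rw [h2]; exact (vproj m k r).hasFDerivAt
  | right ν =>
      have : (fun y => uhat α y (Fin.natAdd m ν)) = fun y : Pt m k => α ν y := by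
        funext y; exact uhat_natAdd α y ν
      rw [this]
      have h2 : (ContinuousLinearMap.proj (Fin.natAdd m ν)).comp (Uder α x) = fderiv ℝ (α ν) x := by
        rw [Uder, ContinuousLinearMap.proj_pi]; simp
      rw [h2]; exact ((hα ν).differentiable (by norm_num)).differentiableAt.hasFDerivAt

def Dfull (α : Fin k → Pt m k → ℝ) (x : Pt m k) : Pt m k →L[ℝ] PtL m k :=
  (ContinuousLinearMap.fst ℝ _ _).prod ((Uder α x).prod
    ((ContinuousLinearMap.snd ℝ (Fin m → ℝ) ℝ).comp (ContinuousLinearMap.snd ℝ _ _)))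

lemma hasFDerivAt_Lpt (α : Fin k → Pt m k → ℝ) (hα : ∀ ν, ContDiff ℝ 2 (α ν)) (x : Pt m k) :
    HasFDerivAt (Lpt α) (Dfull α x) x :=
  HasFDerivAt.prodMk hasFDerivAt_fst (HasFDerivAt.prodMk (hasFDerivAt_uhat α hα x)
    (HasFDerivAt.comp x hasFDerivAt_snd hasFDerivAt_snd))

lemma contDiff_uhat (α : Fin k → Pt m k → ℝ) (hα : ∀ ν, ContDiff ℝ 2 (α ν)) :
    ContDiff ℝ 2 (uhat α) := by
  rw [contDiff_pi]
  intro i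
  induction i using Fin.addCases with
  | left r =>
      have : (fun y => uhat α y (Fin.castAdd k r)) = fun y : Pt m k => y.2.1 r := by
        funext y; exact uhat_castAdd α y r
      rw [this]
      exact (contDiff_apply ℝ ℝ r).comp (contDiff_fst.comp contDiff_snd)
  | right ν =>
      have : (fun y => uhat α y (Fin.natAdd m ν)) = fun y : Pt m k => α ν y := by
        funext y; exact uhat_natAdd α y ν
      rw [this]; exact hα ν

lemma contDiff_Lpt (α : Fin k → Pt m k → ℝ) (hα : ∀ ν, ContDiff ℝ 2 (α ν)) :
    ContDiff ℝ 2 (Lpt α) :=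
  ContDiff.prodMk contDiff_fst (ContDiff.prodMk (contDiff_uhat α hα) (ContDiff.comp contDiff_snd contDiff_snd))

lemma contDiff_Lstar (L : PtL m k → ℝ) (hL : ContDiff ℝ 2 L)
    (α : Fin k → Pt m k → ℝ) (hα : ∀ ν, ContDiff ℝ 2 (α ν)) :
    ContDiff ℝ 2 (Lstar L α) := hL.comp (contDiff_Lpt α hα)

-- fderiv applied in a fixed direction is C¹ for a C² function

lemma contDiff_fderiv_apply {E : Type*} [NormedAddCommGroup E] [NormedSpace ℝ E]
    (f : E → ℝ) (hf : ContDiff ℝ 2 f) (e : E) :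
    ContDiff ℝ 1 (fun x => fderiv ℝ f x e) :=
  (hf.fderiv_right (by norm_num)).clm_apply contDiff_const

-- chain rule for directional derivatives of Lstar

lemma fderiv_Lstar (L : PtL m k → ℝ) (hL : ContDiff ℝ 2 L)
    (α : Fin k → Pt m k → ℝ) (hα : ∀ ν, ContDiff ℝ 2 (α ν)) (x : Pt m k) :
    fderiv ℝ (Lstar L α) x = (fderiv ℝ L (Lpt α x)).comp (Dfull α x) := by
  have h1 : HasFDerivAt L (fderiv ℝ L (Lpt α x)) (Lpt α x) :=
    ((hL.differentiable (by norm_num)) (Lpt α x)).hasFDerivAt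
  exact (h1.comp x (hasFDerivAt_Lpt α hα x)).fderiv

lemma dir_decomp {n m' : ℕ} (f : (Fin n → ℝ) × (Fin m' → ℝ) × ℝ → ℝ)
    (x : (Fin n → ℝ) × (Fin m' → ℝ) × ℝ) (a : Fin n → ℝ) (b : Fin m' → ℝ) (c : ℝ) :
    fderiv ℝ f x (a, b, c) = ∑ i, a i * pq f i x + ∑ j, b j * pv f j x + c * pt f x := by
  set D := fderiv ℝ f x with hD
  have h : (a, b, c) = (∑ i, a i • ((Pi.single i 1 : Fin n → ℝ), (0 : Fin m' → ℝ), (0:ℝ)))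
      + (∑ j, b j • ((0 : Fin n → ℝ), (Pi.single j 1 : Fin m' → ℝ), (0:ℝ)))
      + c • ((0 : Fin n → ℝ), (0 : Fin m' → ℝ), (1:ℝ)) := by
    have ha : (∑ i, a i • ((Pi.single i 1 : Fin n → ℝ), (0 : Fin m' → ℝ), (0:ℝ)))
        = (a, 0, 0) := by
      rw [Prod.ext_iff, Prod.ext_iff]
      refine ⟨?_, ?_, ?_⟩ <;>
        simp [Prod.fst_sum, Prod.snd_sum, ← Pi.single_smul, Finset.univ_sum_single]
    have hb : (∑ j, b j • ((0 : Fin n → ℝ), (Pi.single j 1 : Fin m' → ℝ), (0:ℝ)))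
        = (0, b, 0) := by
      rw [Prod.ext_iff, Prod.ext_iff]
      refine ⟨?_, ?_, ?_⟩ <;>
        simp [Prod.fst_sum, Prod.snd_sum, ← Pi.single_smul, Finset.univ_sum_single]
    rw [ha, hb]; ext <;> simp
  rw [h]
  simp only [map_add, map_sum, map_smul, smul_eq_mul, pq, pv, pt, hD]

-- Dfull applied to the basis directions

lemma Dfull_v (α : Fin k → Pt m k → ℝ) (x : Pt m k) (r : Fin m) :
    Dfull α x (0, Pi.single r 1, 0)
      = (0, Fin.append (Pi.single r 1) (fun ν => pv (α ν) r x), 0) := by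
  refine Prod.ext rfl (Prod.ext ?_ rfl)
  show Uder α x (0, Pi.single r 1, 0) = _
  funext i
  induction i using Fin.addCases with
  | left s => simp [Uder, Fin.append_left, vproj_apply, Fin.addCases_left]
  | right ν => simp [Uder, Fin.append_right, pv, Fin.addCases_right]

lemma Dfull_q (α : Fin k → Pt m k → ℝ) (x : Pt m k) (i : Fin (m+k)) :
    Dfull α x (Pi.single i 1, 0, 0)
      = (Pi.single i 1, Fin.append (0 : Fin m → ℝ) (fun ν => pq (α ν) i x), 0) := by
  refine Prod.ext rfl (Prod.ext ?_ rfl)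
  show Uder α x (Pi.single i 1, 0, 0) = _
  funext j
  induction j using Fin.addCases with
  | left s => simp [Uder, Fin.append_left, vproj_apply, Fin.addCases_left]
  | right ν => simp [Uder, Fin.append_right, pq, Fin.addCases_right]

lemma Dfull_t (α : Fin k → Pt m k → ℝ) (x : Pt m k) :
    Dfull α x (0, 0, 1) = (0, Fin.append (0 : Fin m → ℝ) (fun ν => pt (α ν) x), 1) := by
  refine Prod.ext rfl (Prod.ext ?_ rfl)
  show Uder α x (0, 0, 1) = _
  funext j
  induction j using Fin.addCases with
  | left s => simp [Uder, Fin.append_left, vproj_apply, Fin.addCases_left]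
  | right ν => simp [Uder, Fin.append_right, pt, Fin.addCases_right]

lemma pv_Lstar (L : PtL m k → ℝ) (hL : ContDiff ℝ 2 L)
    (α : Fin k → Pt m k → ℝ) (hα : ∀ ν, ContDiff ℝ 2 (α ν)) (x : Pt m k) (r : Fin m) :
    pv (Lstar L α) r x = pv L (Fin.castAdd k r) (Lpt α x)
      + ∑ ν, pv (α ν) r x * pv L (Fin.natAdd m ν) (Lpt α x) := by
  rw [pv, fderiv_Lstar L hL α hα x]
  rw [ContinuousLinearMap.comp_apply, Dfull_v]
  rw [dir_decomp]
  rw [Fin.sum_univ_add (f := fun i => Fin.append (Pi.single r 1) (fun ν => pv (α ν) r x) i * pv L i (Lpt α x))]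
  simp [Fin.append_left, Fin.append_right, Pi.single_apply, Finset.sum_ite_eq']

lemma pq_Lstar (L : PtL m k → ℝ) (hL : ContDiff ℝ 2 L)
    (α : Fin k → Pt m k → ℝ) (hα : ∀ ν, ContDiff ℝ 2 (α ν)) (x : Pt m k) (i : Fin (m+k)) :
    pq (Lstar L α) i x = pq L i (Lpt α x)
      + ∑ ν, pq (α ν) i x * pv L (Fin.natAdd m ν) (Lpt α x) := by
  rw [pq, fderiv_Lstar L hL α hα x, ContinuousLinearMap.comp_apply, Dfull_q, dir_decomp]
  rw [Fin.sum_univ_add (f := fun j => Fin.append (0 : Fin m → ℝ) (fun ν => pq (α ν) i x) j * pv L j (Lpt α x))]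
  simp [Fin.append_left, Fin.append_right, Pi.single_apply, Finset.sum_ite_eq', pq]

lemma pt_Lstar (L : PtL m k → ℝ) (hL : ContDiff ℝ 2 L)
    (α : Fin k → Pt m k → ℝ) (hα : ∀ ν, ContDiff ℝ 2 (α ν)) (x : Pt m k) :
    pt (Lstar L α) x = pt L (Lpt α x)
      + ∑ ν, pt (α ν) x * pv L (Fin.natAdd m ν) (Lpt α x) := by
  rw [pt, fderiv_Lstar L hL α hα x, ContinuousLinearMap.comp_apply, Dfull_t, dir_decomp]
  rw [Fin.sum_univ_add (f := fun j => Fin.append (0 : Fin m → ℝ) (fun ν => pt (α ν) x) j * pv L j (Lpt α x))]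
  simp [Fin.append_left, Fin.append_right, pt, add_comm]

lemma part_one (L : PtL m k → ℝ) (hL : ContDiff ℝ 2 L)
    (α : Fin k → Pt m k → ℝ) (hα : ∀ ν, ContDiff ℝ 2 (α ν))
    (habar : ∀ (ν : Fin k) (x : Pt m k), abar α ν x = α ν x) (x : Pt m k) :
    ∑ i : Fin (m+k), uhat α x i * pv L i (Lpt α x)
      = ∑ r : Fin m, x.2.1 r * pv (Lstar L α) r x := by
  rw [Fin.sum_univ_add (f := fun i => uhat α x i * pv L i (Lpt α x))]
  have hrhs : ∀ r : Fin m, x.2.1 r * pv (Lstar L α) r x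
      = x.2.1 r * pv L (Fin.castAdd k r) (Lpt α x)
        + ∑ ν, x.2.1 r * (pv (α ν) r x * pv L (Fin.natAdd m ν) (Lpt α x)) := by
    intro r; rw [pv_Lstar L hL α hα x r, mul_add, Finset.mul_sum]
  simp only [hrhs, Finset.sum_add_distrib]
  rw [Finset.sum_comm]
  congr 1
  · exact Finset.sum_congr rfl fun r _ => by rw [uhat_castAdd]
  · refine Finset.sum_congr rfl fun ν _ => ?_
    rw [uhat_natAdd, ← habar ν x, abar, Finset.sum_mul]
    exact Finset.sum_congr rfl fun r _ => by ring

variable {q : ℝ → Fin (m+k) → ℝ}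

/-- `v̇(t)` -/

def vdot (m k : ℕ) (q : ℝ → Fin (m+k) → ℝ) (t : ℝ) (r : Fin m) : ℝ :=
  deriv (fun s => vel m k q s r) t

lemma contDiff_q_comp (hq : ContDiff ℝ 2 q) (i : Fin (m+k)) :
    ContDiff ℝ 2 (fun s => q s i) := contDiff_pi.1 hq i

lemma contDiff_vel (hq : ContDiff ℝ 2 q) (r : Fin m) :
    ContDiff ℝ 1 (fun s => vel m k q s r) := by
  have h := contDiff_q_comp hq (Fin.castAdd k r)
  have : (2 : WithTop ℕ∞) = 1 + 1 := by norm_num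
  rw [this, contDiff_succ_iff_deriv] at h
  exact h.2.2

lemma hasDerivAt_along (hq : ContDiff ℝ 2 q) (t : ℝ) :
    HasDerivAt (along m k q) (qdot q t, vdot m k q t, 1) t := by
  refine HasDerivAt.prodMk ?_ (HasDerivAt.prodMk ?_ (hasDerivAt_id t))
  · refine hasDerivAt_pi.2 fun i => ?_
    exact (((contDiff_q_comp hq i).differentiable (by norm_num)) t).hasDerivAt
  · refine hasDerivAt_pi.2 fun r => ?_
    exact (((contDiff_vel hq r).differentiable (by norm_num)) t).hasDerivAt

lemma hasDerivAt_comp_along (hq : ContDiff ℝ 2 q) (t : ℝ) (f : Pt m k → ℝ)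
    (hf : DifferentiableAt ℝ f (along m k q t)) :
    HasDerivAt (fun s => f (along m k q s))
      (∑ i, qdot q t i * pq f i (along m k q t)
        + ∑ r, vdot m k q t r * pv f r (along m k q t) + pt f (along m k q t)) t := by
  have h := hf.hasFDerivAt.comp_hasDerivAt t (hasDerivAt_along hq t)
  have hval : fderiv ℝ f (along m k q t) (qdot q t, vdot m k q t, 1)
      = ∑ i, qdot q t i * pq f i (along m k q t)
        + ∑ r, vdot m k q t r * pv f r (along m k q t) + pt f (along m k q t) := by
    rw [dir_decomp]; ring
  rwa [hval] at h

lemma qdot_split (α : Fin k → Pt m k → ℝ) (hcon : Constrained α q) (t : ℝ)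
    (g : Fin (m+k) → ℝ) :
    ∑ i, qdot q t i * g i
      = ∑ r, vel m k q t r * g (Fin.castAdd k r)
        + ∑ ν, α ν (along m k q t) * g (Fin.natAdd m ν) := by
  rw [Fin.sum_univ_add (f := fun i => qdot q t i * g i)]
  congr 1
  exact Finset.sum_congr rfl fun ν _ => by rw [hcon t ν]

lemma hasDerivAt_vel (hq : ContDiff ℝ 2 q) (t : ℝ) (r : Fin m) :
    HasDerivAt (fun s => vel m k q s r) (vdot m k q t r) t :=
  (((contDiff_vel hq r).differentiable one_ne_zero) t).hasDerivAt

lemma hasDerivAt_pv_along (hq : ContDiff ℝ 2 q) (t : ℝ) (f : Pt m k → ℝ)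
    (hf : ContDiff ℝ 2 f) (r : Fin m) :
    HasDerivAt (fun s => pv f r (along m k q s))
      (deriv (fun s => pv f r (along m k q s)) t) t := by
  refine DifferentiableAt.hasDerivAt ?_
  exact DifferentiableAt.comp t
    (((contDiff_fderiv_apply f hf _).differentiable one_ne_zero) (along m k q t))
    (hasDerivAt_along hq t).differentiableAt

lemma sum_v_Bco (hq : ContDiff ℝ 2 q) (α : Fin k → Pt m k → ℝ)
    (hα : ∀ ν, ContDiff ℝ 2 (α ν))
    (habar : ∀ (ν : Fin k) (x : Pt m k), abar α ν x = α ν x)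
    (hcon : Constrained α q) (ν : Fin k) (t : ℝ) :
    ∑ r, vel m k q t r * Bco α q r ν t = pt (α ν) (along m k q t) := by
  set x := along m k q t with hx
  set Ad : Fin m → ℝ := fun r => deriv (fun s => pv (α ν) r (along m k q s)) t with hAd
  -- the product rule on ∑ vel * pv α = α ∘ along
  have hprod : HasDerivAt (fun s => ∑ r, vel m k q s r * pv (α ν) r (along m k q s))
      (∑ r, (vdot m k q t r * pv (α ν) r x + vel m k q t r * Ad r)) t :=
    HasDerivAt.fun_sum fun r _ => (hasDerivAt_vel hq t r).mul (hasDerivAt_pv_along hq t (α ν) (hα ν) r)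
  have heq : (fun s => ∑ r, vel m k q s r * pv (α ν) r (along m k q s))
      = fun s => α ν (along m k q s) := by
    funext s; rw [← habar ν (along m k q s)]; rfl
  rw [heq] at hprod
  have hchain := hasDerivAt_comp_along hq t (α ν)
    (((hα ν).differentiable (by norm_num)) (along m k q t))
  have huniq := hprod.unique hchain
  -- hence ∑ vel * Ad = ∑ qdot * pq + pt
  have hS1 : ∑ r, vel m k q t r * Ad r
      = ∑ i, qdot q t i * pq (α ν) i x + pt (α ν) x := by
    have := huniq
    rw [Finset.sum_add_distrib] at this
    have h2 : ∑ r, vdot m k q t r * pv (α ν) r x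
        = ∑ r, vdot m k q t r * pv (α ν) r x := rfl
    linarith [this]
  -- expand Bco
  have hB : ∑ r, vel m k q t r * Bco α q r ν t
      = ∑ r, vel m k q t r * Ad r
        - ∑ r, vel m k q t r * pq (α ν) (Fin.castAdd k r) x
        - ∑ r, vel m k q t r * ∑ μ, pv (α μ) r x * pq (α ν) (Fin.natAdd m μ) x := by
    simp only [Bco, ← hx, mul_sub, Finset.sum_sub_distrib, ← hAd]
    rfl
  rw [hB, hS1, qdot_split α hcon t (fun i => pq (α ν) i x)]
  have h3 : ∑ r, vel m k q t r * ∑ μ, pv (α μ) r x * pq (α ν) (Fin.natAdd m μ) x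
      = ∑ μ, α μ x * pq (α ν) (Fin.natAdd m μ) x := by
    simp only [Finset.mul_sum]
    rw [Finset.sum_comm]
    refine Finset.sum_congr rfl fun μ _ => ?_
    rw [← habar μ x, abar, Finset.sum_mul]
    refine Finset.sum_congr rfl fun r _ => ?_
    have hxv : x.2.1 r = vel m k q t r := rfl
    rw [hxv]; ring
  rw [h3]; ring

lemma swap_helper (α : Fin k → Pt m k → ℝ)
    (habar : ∀ (ν : Fin k) (x : Pt m k), abar α ν x = α ν x) (t : ℝ) (c : Fin k → ℝ) :
    ∑ r, vel m k q t r * ∑ ν, c ν * pv (α ν) r (along m k q t)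
      = ∑ ν, c ν * α ν (along m k q t) := by
  simp only [Finset.mul_sum]
  rw [Finset.sum_comm]
  refine Finset.sum_congr rfl fun ν _ => ?_
  rw [← habar ν (along m k q t), abar, Finset.mul_sum]
  refine Finset.sum_congr rfl fun r _ => ?_
  have hxv : (along m k q t).2.1 r = vel m k q t r := rfl
  rw [hxv]; ring

lemma hasDerivAt_Estar (L : PtL m k → ℝ) (hL : ContDiff ℝ 2 L)
    (α : Fin k → Pt m k → ℝ) (hα : ∀ ν, ContDiff ℝ 2 (α ν))
    (habar : ∀ (ν : Fin k) (x : Pt m k), abar α ν x = α ν x)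
    (hq : ContDiff ℝ 2 q) (hcon : Constrained α q) (hvor : Voronec L α q) (t : ℝ) :
    HasDerivAt (fun s => Estar L α (along m k q s))
      (- pt L (Lpt α (along m k q t))) t := by
  have hLsC : ContDiff ℝ 2 (Lstar L α) := contDiff_Lstar L hL α hα
  set x := along m k q t with hxdef
  set y := Lpt α x with hydef
  set Pd : Fin m → ℝ := fun r => deriv (fun s => pv (Lstar L α) r (along m k q s)) t with hPd
  have hprod : HasDerivAt (fun s => ∑ r, vel m k q s r * pv (Lstar L α) r (along m k q s))
      (∑ r, (vdot m k q t r * pv (Lstar L α) r x + vel m k q t r * Pd r)) t :=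
    HasDerivAt.fun_sum fun r _ =>
      (hasDerivAt_vel hq t r).mul (hasDerivAt_pv_along hq t (Lstar L α) hLsC r)
  have hLs : HasDerivAt (fun s => Lstar L α (along m k q s))
      (∑ i, qdot q t i * pq (Lstar L α) i x
        + ∑ r, vdot m k q t r * pv (Lstar L α) r x + pt (Lstar L α) x) t :=
    hasDerivAt_comp_along hq t (Lstar L α) ((hLsC.differentiable (by norm_num)) x)
  have hE0 : HasDerivAt (fun s => Estar L α (along m k q s))
      ((∑ r, (vdot m k q t r * pv (Lstar L α) r x + vel m k q t r * Pd r))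
        - (∑ i, qdot q t i * pq (Lstar L α) i x
            + ∑ r, vdot m k q t r * pv (Lstar L α) r x + pt (Lstar L α) x)) t := by
    have := hprod.sub hLs
    exact this
  -- identify the derivative value
  have hval : (∑ r, (vdot m k q t r * pv (Lstar L α) r x + vel m k q t r * Pd r))
        - (∑ i, qdot q t i * pq (Lstar L α) i x
            + ∑ r, vdot m k q t r * pv (Lstar L α) r x + pt (Lstar L α) x)
      = - pt L y := by
    -- use Voronec to rewrite Pd
    have hvor' : ∀ r, Pd r = pq (Lstar L α) (Fin.castAdd k r) x
        + ∑ ν, pq (Lstar L α) (Fin.natAdd m ν) x * pv (α ν) r x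
        + ∑ ν, Bco α q r ν t * pv L (Fin.natAdd m ν) y := by
      intro r; have := hvor r t; rw [← hxdef, ← hydef] at this; linarith
    have hPsum : ∑ r, vel m k q t r * Pd r
        = ∑ r, vel m k q t r * pq (Lstar L α) (Fin.castAdd k r) x
          + ∑ ν, pq (Lstar L α) (Fin.natAdd m ν) x * α ν x
          + ∑ ν, pt (α ν) x * pv L (Fin.natAdd m ν) y := by
      simp only [fun r => hvor' r, mul_add, Finset.sum_add_distrib]
      congr 1
      · congr 1
        exact swap_helper α habar t _
      · -- swap Bco sum
        simp only [Finset.mul_sum]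
        rw [Finset.sum_comm]
        refine Finset.sum_congr rfl fun ν _ => ?_
        have hsb := sum_v_Bco hq α hα habar hcon ν t
        rw [← hxdef] at hsb
        rw [← hsb, Finset.sum_mul]
        exact Finset.sum_congr rfl fun r _ => by ring
    have hqd : ∑ i, qdot q t i * pq (Lstar L α) i x
        = ∑ r, vel m k q t r * pq (Lstar L α) (Fin.castAdd k r) x
          + ∑ ν, α ν x * pq (Lstar L α) (Fin.natAdd m ν) x :=
      qdot_split α hcon t _
    have hpt : pt (Lstar L α) x = pt L y + ∑ ν, pt (α ν) x * pv L (Fin.natAdd m ν) y :=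
      pt_Lstar L hL α hα x
    rw [Finset.sum_add_distrib, hPsum, hqd, hpt]
    have hcomm : ∑ ν, pq (Lstar L α) (Fin.natAdd m ν) x * α ν x
        = ∑ ν, α ν x * pq (Lstar L α) (Fin.natAdd m ν) x :=
      Finset.sum_congr rfl fun ν _ => mul_comm _ _
    rw [hcomm]; ring
  rwa [hval] at hE0

theorem homogeneous_energy_conservation (m k : ℕ) (hm : 0 < m) (hk : 0 < k)
    (L : PtL m k → ℝ) (hL : ContDiff ℝ 2 L)
    (α : Fin k → Pt m k → ℝ) (hα : ∀ ν, ContDiff ℝ 2 (α ν))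
    (habar : ∀ (ν : Fin k) (x : Pt m k), abar α ν x = α ν x) :
    (∀ x : Pt m k,
      (∑ i : Fin (m+k), uhat α x i * pv L i (Lpt α x)
        = ∑ r : Fin m, x.2.1 r * pv (Lstar L α) r x)
      ∧ En L α x = Estar L α x)
    ∧ (∀ (q : ℝ → Fin (m+k) → ℝ), ContDiff ℝ 2 q → Constrained α q → Voronec L α q →
        ∀ t : ℝ,
          deriv (fun s => Estar L α (along m k q s)) t = - pt L (Lpt α (along m k q t)))
    ∧ ((∀ x : PtL m k, pt L x = 0) →
        ∀ (q : ℝ → Fin (m+k) → ℝ), ContDiff ℝ 2 q → Constrained α q → Voronec L α q →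
        ∀ t₁ t₂ : ℝ, Estar L α (along m k q t₁) = Estar L α (along m k q t₂)) := by
  refine ⟨fun x => ?_, fun q hq hcon hvor t => ?_, fun hpt' q hq hcon hvor t₁ t₂ => ?_⟩
  · have h1 := part_one L hL α hα habar x
    exact ⟨h1, by rw [En, Estar, h1]⟩
  · exact (hasDerivAt_Estar L hL α hα habar hq hcon hvor t).deriv
  · exact is_const_of_deriv_eq_zero
      (fun t => (hasDerivAt_Estar L hL α hα habar hq hcon hvor t).differentiableAt)
      (fun t => by
        rw [(hasDerivAt_Estar L hL α hα habar hq hcon hvor t).deriv, hpt', neg_zero]) t₁ t₂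


end NH
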